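/- Let φ : [0,T) → ℝ be C² with φ(0) = α > 0, φ'(0) = β > 0, and φ''(t) ≥ h(φ(t)) for all t, where h(s) ≥ 0 for s ≥ α. Then for every t in [0,T), t ≤ ∫_α^{φ(t)} (β² + 2∫_α^s h(ξ) dξ)^{-1/2} ds. -/

import Mathlib

open Set MeasureTheory intervalIntegral Filter Topology

/-- Glassey ODE lemma, part (2): under `φ'' ≥ h(φ)` with `h ≥ 0` on `[α,∞)`,
`φ(0) = α > 0`, `φ'(0) = β > 0`, one has
`t ≤ ∫_α^{φ(t)} (β² + 2∫_α^s h)^(−1/2) ds` for `t ∈ [0,T)`. -/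
theorem stmt_1 (T : ℝ) (hT : 0 < T) (φ φ' φ'' h : ℝ → ℝ) (α β : ℝ)
    (hα : 0 < α) (hβ : 0 < β)
    (hφ0 : φ 0 = α) (hφ'0 : φ' 0 = β)
    (hd1 : ∀ t ∈ Set.Ico (0:ℝ) T, HasDerivWithinAt φ (φ' t) (Set.Ico 0 T) t)
    (hd2 : ∀ t ∈ Set.Ico (0:ℝ) T, HasDerivWithinAt φ' (φ'' t) (Set.Ico 0 T) t)
    (hC : ContinuousOn φ'' (Set.Ico 0 T))
    (hhC : Continuous h)
    (hineq : ∀ t ∈ Set.Ico (0:ℝ) T, φ'' t ≥ h (φ t))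
    (hh : ∀ s, α ≤ s → 0 ≤ h s) :
    ∀ t ∈ Set.Ico (0:ℝ) T,
      t ≤ ∫ s in α..φ t, (β ^ 2 + 2 * ∫ ξ in α..s, h ξ) ^ (-(1/2) : ℝ) := by
  have hφcont : ContinuousOn φ (Set.Ico 0 T) := fun t ht => (hd1 t ht).continuousWithinAt
  have hφ'cont : ContinuousOn φ' (Set.Ico 0 T) := fun t ht => (hd2 t ht).continuousWithinAt
  have hderiv1 : ∀ t ∈ Set.Ioo (0:ℝ) T, HasDerivAt φ (φ' t) t := fun t ht =>
    (hd1 t (Ioo_subset_Ico_self ht)).hasDerivAt (Ico_mem_nhds ht.1 ht.2)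
  have hderiv2 : ∀ t ∈ Set.Ioo (0:ℝ) T, HasDerivAt φ' (φ'' t) t := fun t ht =>
    (hd2 t (Ioo_subset_Ico_self ht)).hasDerivAt (Ico_mem_nhds ht.1 ht.2)
  -- Key monotonicity lemma: if `φ' > 0` on `[0,b]` then `φ' ≥ β` on `[0,b]`.
  have L1 : ∀ b ∈ Set.Ico (0:ℝ) T, (∀ s ∈ Set.Icc (0:ℝ) b, 0 < φ' s) →
      ∀ s ∈ Set.Icc (0:ℝ) b, β ≤ φ' s := by
    intro b hb hpos
    have hsub : Set.Icc (0:ℝ) b ⊆ Set.Ico 0 T :=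
      fun x hx => ⟨hx.1, lt_of_le_of_lt hx.2 hb.2⟩
    have hsubIoo : Set.Ioo (0:ℝ) b ⊆ Set.Ioo 0 T :=
      fun x hx => ⟨hx.1, lt_trans hx.2 hb.2⟩
    have hφmono : MonotoneOn φ (Set.Icc 0 b) := by
      apply monotoneOn_of_hasDerivWithinAt_nonneg (convex_Icc 0 b) (hφcont.mono hsub)
        (f' := φ')
      · intro x hx
        rw [interior_Icc] at hx ⊢
        exact (hderiv1 x (hsubIoo hx)).hasDerivWithinAt
      · intro x hx
        rw [interior_Icc] at hx
        exact (hpos x (Ioo_subset_Icc_self hx)).le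
    have hφα : ∀ s ∈ Set.Icc (0:ℝ) b, α ≤ φ s := by
      intro s hs
      have := hφmono ⟨le_rfl, hb.1⟩ hs hs.1
      rwa [hφ0] at this
    have hφ'mono : MonotoneOn φ' (Set.Icc 0 b) := by
      apply monotoneOn_of_hasDerivWithinAt_nonneg (convex_Icc 0 b) (hφ'cont.mono hsub)
        (f' := φ'')
      · intro x hx
        rw [interior_Icc] at hx ⊢
        exact (hderiv2 x (hsubIoo hx)).hasDerivWithinAt
      · intro x hx
        rw [interior_Icc] at hx
        have hx' := Ioo_subset_Icc_self hx
        have h1 := hineq x (hsub hx')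
        have h2 := hh (φ x) (hφα x hx')
        linarith
    intro s hs
    have := hφ'mono ⟨le_rfl, hb.1⟩ hs hs.1
    rwa [hφ'0] at this
  -- Bootstrap: `φ' ≥ β` on all of `[0,T)`.
  have hβle : ∀ t ∈ Set.Ico (0:ℝ) T, β ≤ φ' t := by
    intro t ht
    have hpos : ∀ s ∈ Set.Icc (0:ℝ) t, 0 < φ' s := by
      by_contra hcon
      push_neg at hcon
      obtain ⟨s0, hs0, hs0le⟩ := hcon
      have hsub : Set.Icc (0:ℝ) t ⊆ Set.Ico 0 T :=
        fun x hx => ⟨hx.1, lt_of_le_of_lt hx.2 ht.2⟩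
      set S : Set ℝ := {s ∈ Set.Icc (0:ℝ) t | φ' s ≤ 0} with hS
      have hScl : IsClosed S :=
        (hφ'cont.mono hsub).preimage_isClosed_of_isClosed isClosed_Icc isClosed_Iic
      have hSne : S.Nonempty := ⟨s0, hs0, hs0le⟩
      have hSbdd : BddBelow S := ⟨0, fun x hx => hx.1.1⟩
      set u := sInf S with hu
      have huS : u ∈ S := hScl.csInf_mem hSne hSbdd
      have hu0 : 0 < u := by
        rcases lt_or_eq_of_le huS.1.1 with h' | h'
        · exact h'
        · exfalso; rw [← h'] at huS; have := huS.2; rw [hφ'0] at this; linarith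
      have hbelow : ∀ s ∈ Set.Ico (0:ℝ) u, β ≤ φ' s := by
        intro s hs
        have hsT : s ∈ Set.Ico (0:ℝ) T :=
          ⟨hs.1, lt_of_lt_of_le hs.2 (huS.1.2.trans ht.2.le)⟩
        refine L1 s hsT ?_ s ⟨hs.1, le_rfl⟩
        intro x hx
        by_contra hx0
        push_neg at hx0
        have hxS : x ∈ S := ⟨⟨hx.1, hx.2.trans (hs.2.le.trans huS.1.2)⟩, hx0⟩
        have : u ≤ x := csInf_le hSbdd hxS
        have : x < u := lt_of_le_of_lt hx.2 hs.2
        linarith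
      -- continuity from the left at `u` gives `β ≤ φ' u ≤ 0`, contradiction
      have hcw : ContinuousWithinAt φ' (Set.Ico 0 u) u := by
        have := (hφ'cont.mono hsub) u huS.1
        exact this.mono (fun x hx => ⟨hx.1, hx.2.le.trans huS.1.2⟩)
      have hne : (𝓝[Set.Ico (0:ℝ) u] u).NeBot := by
        rw [← mem_closure_iff_nhdsWithin_neBot, closure_Ico (ne_of_lt hu0)]
        exact ⟨hu0.le, le_rfl⟩
      have hβu : β ≤ φ' u :=
        ge_of_tendsto hcw (eventually_nhdsWithin_of_forall hbelow)
      have := huS.2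
      linarith
    exact L1 t ht hpos t ⟨ht.1, le_rfl⟩
  have hφ'pos : ∀ t ∈ Set.Ico (0:ℝ) T, 0 < φ' t := fun t ht => lt_of_lt_of_le hβ (hβle t ht)
  have hφmono : MonotoneOn φ (Set.Ico 0 T) := by
    apply monotoneOn_of_hasDerivWithinAt_nonneg (convex_Ico 0 T) hφcont (f' := φ')
    · intro x hx
      rw [interior_Ico] at hx ⊢
      exact (hderiv1 x hx).hasDerivWithinAt
    · intro x hx
      rw [interior_Ico] at hx
      exact (hφ'pos x (Ioo_subset_Ico_self hx)).le
  have hφα : ∀ t ∈ Set.Ico (0:ℝ) T, α ≤ φ t := by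
    intro t ht
    have := hφmono ⟨le_rfl, hT⟩ ht ht.1
    rwa [hφ0] at this
  -- the inner integral
  set H : ℝ → ℝ := fun u => ∫ ξ in α..u, h ξ with hHdef
  have hHderiv : ∀ u : ℝ, HasDerivAt H (h u) u := fun u =>
    integral_hasDerivAt_right (hhC.intervalIntegrable α u)
      hhC.aestronglyMeasurable.stronglyMeasurableAtFilter hhC.continuousAt
  have hHcont : Continuous H := continuous_iff_continuousAt.2
    fun u => (hHderiv u).continuousAt
  have hHnonneg : ∀ u, α ≤ u → 0 ≤ H u := fun u hu =>
    intervalIntegral.integral_nonneg hu (fun ξ hξ => hh ξ hξ.1)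
  -- energy inequality
  set E : ℝ → ℝ := fun t => φ' t ^ 2 - 2 * H (φ t) with hEdef
  have hEderiv : ∀ t ∈ Set.Ioo (0:ℝ) T,
      HasDerivAt E (2 * φ' t * φ'' t - 2 * (h (φ t) * φ' t)) t := by
    intro t ht
    have h1 : HasDerivAt (fun s => φ' s ^ 2) (2 * φ' t * φ'' t) t := by
      have := (hderiv2 t ht).fun_pow 2
      simpa using this
    have h2 : HasDerivAt (fun s => H (φ s)) (h (φ t) * φ' t) t :=
      (hHderiv (φ t)).comp t (hderiv1 t ht)
    exact h1.sub (h2.const_mul 2)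
  have hEcont : ContinuousOn E (Set.Ico 0 T) :=
    (hφ'cont.pow 2).sub (continuousOn_const.mul ((hHcont.comp_continuousOn hφcont)))
  have hEmono : MonotoneOn E (Set.Ico 0 T) := by
    apply monotoneOn_of_hasDerivWithinAt_nonneg (convex_Ico 0 T) hEcont
      (f' := fun t => 2 * φ' t * φ'' t - 2 * (h (φ t) * φ' t))
    · intro x hx
      rw [interior_Ico] at hx ⊢
      exact (hEderiv x hx).hasDerivWithinAt
    · intro x hx
      rw [interior_Ico] at hx
      have hx' := Ioo_subset_Ico_self hx
      have h1 := hineq x hx'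
      have h2 := hφ'pos x hx'
      nlinarith
  have hE0 : E 0 = β ^ 2 := by
    simp [hEdef, hHdef, hφ0, hφ'0, intervalIntegral.integral_same]
  have energy : ∀ t ∈ Set.Ico (0:ℝ) T, β ^ 2 + 2 * H (φ t) ≤ φ' t ^ 2 := by
    intro t ht
    have := hEmono ⟨le_rfl, hT⟩ ht ht.1
    rw [hE0] at this
    simp only [hEdef] at this
    linarith
  -- the outer integrand
  set g : ℝ → ℝ := fun u => β ^ 2 + 2 * H u with hgdef
  set F : ℝ → ℝ := fun s => g s ^ (-(1/2) : ℝ) with hFdef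
  have hgcont : Continuous g := continuous_const.add (continuous_const.mul hHcont)
  have hgpos : ∀ u, α ≤ u → 0 < g u := by
    intro u hu
    have := hHnonneg u hu
    simp only [hgdef]
    nlinarith
  set U : Set ℝ := {u | 0 < g u} with hUdef
  have hUopen : IsOpen U := isOpen_lt continuous_const hgcont
  have hFcontU : ∀ u ∈ U, ContinuousAt F u := fun u hu =>
    (Real.continuousAt_rpow_const (g u) _ (Or.inl (ne_of_gt hu))).comp hgcont.continuousAt
  have hIccU : ∀ u, α ≤ u → Set.uIcc α u ⊆ U := by
    intro u hu x hx
    rw [Set.uIcc_of_le hu] at hx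
    exact hgpos x hx.1
  have hFint : ∀ u, α ≤ u → IntervalIntegrable F volume α u := by
    intro u hu
    exact ContinuousOn.intervalIntegrable
      (fun x hx => ((hFcontU x (hIccU u hu hx)).continuousWithinAt))
  set G : ℝ → ℝ := fun u => ∫ s in α..u, F s with hGdef
  have hGderiv : ∀ u, α ≤ u → HasDerivAt G (F u) u := by
    intro u hu
    exact integral_hasDerivAt_right (hFint u hu)
      (ContinuousAt.stronglyMeasurableAtFilter hUopen hFcontU u (hgpos u hu))
      (hFcontU u (hgpos u hu))
  -- W t = G (φ t) - t is monotone with W 0 = 0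
  set W : ℝ → ℝ := fun t => G (φ t) - t with hWdef
  have hWderiv : ∀ t ∈ Set.Ico (0:ℝ) T,
      HasDerivWithinAt W (F (φ t) * φ' t - 1) (Set.Ico 0 T) t := by
    intro t ht
    have h1 : HasDerivWithinAt (fun s => G (φ s)) (F (φ t) * φ' t) (Set.Ico 0 T) t :=
      (hGderiv (φ t) (hφα t ht)).comp_hasDerivWithinAt t (hd1 t ht)
    simpa using h1.fun_sub (hasDerivWithinAt_id t (Set.Ico 0 T))
  have hWd_nonneg : ∀ t ∈ Set.Ico (0:ℝ) T, 0 ≤ F (φ t) * φ' t - 1 := by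
    intro t ht
    have hg0 : 0 < g (φ t) := hgpos _ (hφα t ht)
    have hsq : Real.sqrt (g (φ t)) ≤ φ' t := by
      have h1 := energy t ht
      have h2 : g (φ t) ≤ φ' t ^ 2 := by simpa [hgdef] using h1
      have := Real.sqrt_le_sqrt h2
      rwa [Real.sqrt_sq (hφ'pos t ht).le] at this
    have hsqpos : 0 < Real.sqrt (g (φ t)) := Real.sqrt_pos.2 hg0
    have hF : F (φ t) = (Real.sqrt (g (φ t)))⁻¹ := by
      rw [hFdef]
      simp only
      rw [Real.rpow_neg hg0.le, Real.sqrt_eq_rpow]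
    rw [hF, sub_nonneg, ← div_eq_inv_mul, le_div_iff₀ hsqpos, one_mul]
    exact hsq
  have hWcont : ContinuousOn W (Set.Ico 0 T) :=
    fun t ht => (hWderiv t ht).continuousWithinAt
  have hWmono : MonotoneOn W (Set.Ico 0 T) := by
    apply monotoneOn_of_hasDerivWithinAt_nonneg (convex_Ico 0 T) hWcont
      (f' := fun t => F (φ t) * φ' t - 1)
    · intro x hx
      rw [interior_Ico] at hx ⊢
      exact (hWderiv x (Ioo_subset_Ico_self hx)).mono Ioo_subset_Ico_self
    · intro x hx
      rw [interior_Ico] at hx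
      exact hWd_nonneg x (Ioo_subset_Ico_self hx)
  have hW0 : W 0 = 0 := by
    simp [hWdef, hGdef, hφ0, intervalIntegral.integral_same]
  intro t ht
  have := hWmono ⟨le_rfl, hT⟩ ht ht.1
  rw [hW0] at this
  simp only [hWdef] at this
  have hfinal : t ≤ G (φ t) := by linarith
  simpa [hGdef, hFdef, hgdef, hHdef] using hfinal
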